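/- Fix L > 0, F > 0 and a > 1. For the unique fixed configuration of N particles on the segment [0, L] with x_1 = 0, x_N = L and constant force F, write Δ_k = (L/(N−1))(1 + δ_k) and q = (L/(N−1))^a F. Then as N → ∞, δ_1 = a^{−1} q (N/2 − 1) + (a^{−1}(a^{−1}+1)/12) q^2 (N−2)(N−3) + J_1(N), where J_1(N) = o(N^{−2a+2}). -/

import Mathlib

open Real Filter Set Asymptotics
open Finset
set_option maxHeartbeats 1000000

/-- The repulsion force `f(r) = r^{-a}`. -/
noncomputable def fpow (a r : ℝ) : ℝ := r ^ (-a)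

/-- The clockwise gaps of a configuration `x 1 < ... < x N` on the circle of
circumference `L`: `Δ k = x (k+1) - x k` for `1 ≤ k ≤ N-1` and `Δ N = L - x N + x 1`. -/
def cgap (L : ℝ) (N : ℕ) (x : ℕ → ℝ) (k : ℕ) : ℝ :=
  if k < N then x (k + 1) - x k else L - x N + x 1

/-- A configuration of `N` particles on the circle of circumference `L`,
variant with `0 ≤ x 1 < ... < x N < L`. -/
def CircleConfigA (L : ℝ) (N : ℕ) (x : ℕ → ℝ) : Prop :=
  0 ≤ x 1 ∧ (∀ k, 1 ≤ k → k < N → x k < x (k + 1)) ∧ x N < L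

/-- A fixed (critical) configuration on the circle (variant `0 ≤ x 1`, `x N < L`):
`f(Δ (k-1)) + F (x k) - f(Δ k) = 0` for `k = 1, ..., N`, with `Δ 0 = Δ N`. -/
def CircleFixedA (a L : ℝ) (F : ℝ → ℝ) (N : ℕ) (x : ℕ → ℝ) : Prop :=
  CircleConfigA L N x ∧
  ∀ k, 1 ≤ k → k ≤ N →
    fpow a (cgap L N x (if k = 1 then N else k - 1)) + F (x k) - fpow a (cgap L N x k) = 0

/-- A configuration of `N` particles on the circle of circumference `L`,
variant with `0 < x 1 < ... < x N ≤ L`. -/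
def CircleConfigB (L : ℝ) (N : ℕ) (x : ℕ → ℝ) : Prop :=
  0 < x 1 ∧ (∀ k, 1 ≤ k → k < N → x k < x (k + 1)) ∧ x N ≤ L

/-- A fixed (critical) configuration on the circle (variant `0 < x 1`, `x N ≤ L`):
`f(Δ (k-1)) + F (x k) - f(Δ k) = 0` for `k = 1, ..., N`, with `Δ 0 = Δ N`. -/
def CircleFixedB (a L : ℝ) (F : ℝ → ℝ) (N : ℕ) (x : ℕ → ℝ) : Prop :=
  CircleConfigB L N x ∧
  ∀ k, 1 ≤ k → k ≤ N →
    fpow a (cgap L N x (if k = 1 then N else k - 1)) + F (x k) - fpow a (cgap L N x k) = 0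

/-- A fixed configuration of `N` particles on the segment `[0, L]` with constant
force `F`, completely inelastic boundary conditions, and `x 1 = 0`, `x N = L`. -/
def SegmentFixed (a L F : ℝ) (N : ℕ) (x : ℕ → ℝ) : Prop :=
  x 1 = 0 ∧ x N = L ∧ (∀ k, 1 ≤ k → k < N → x k < x (k + 1)) ∧
  (∀ k, 2 ≤ k → k ≤ N - 1 → fpow a (x k - x (k - 1)) + F - fpow a (x (k + 1) - x k) = 0) ∧
  F - fpow a (x 2) ≤ 0 ∧ 0 ≤ F + fpow a (L - x (N - 1))


/-- MVT bound: if `f 0 = 0` and `|f'| ≤ C` on `uIcc 0 u`, then `|f u| ≤ C * |u|`. -/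
lemma mvt_abs_le {f f' : ℝ → ℝ} {u C : ℝ}
    (hd : ∀ v ∈ Set.uIcc (0:ℝ) u, HasDerivAt f (f' v) v)
    (hC : ∀ v ∈ Set.uIcc (0:ℝ) u, |f' v| ≤ C)
    (h0 : f 0 = 0) : |f u| ≤ C * |u| := by
  have := Convex.norm_image_sub_le_of_norm_hasDerivWithin_le
    (f := f) (f' := f') (s := Set.uIcc (0:ℝ) u)
    (fun v hv => (hd v hv).hasDerivWithinAt)
    (fun v hv => hC v hv) (convex_uIcc _ _)
    (Set.left_mem_uIcc) (Set.right_mem_uIcc)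
  simpa [h0, Real.norm_eq_abs] using this

lemma hasDerivAt_one_add_rpow (p v : ℝ) (hv : -1 < v) :
    HasDerivAt (fun t => (1+t)^p) (p * (1+v)^(p-1)) v := by
  have h1 : HasDerivAt (fun t : ℝ => 1 + t) 1 v := by
    simpa using (hasDerivAt_id v).const_add 1
  have h2 := (Real.hasDerivAt_rpow_const (x := 1+v) (p := p) (Or.inl (by linarith)))
  have h3 := h2.comp v h1
  rw [mul_one] at h3
  exact h3

/-- Third-order Taylor estimate for `(1+u)^(-b)` around `0`. -/
lemma taylor3 (b u : ℝ) (hb : 0 < b) (hu : |u| ≤ 1/2) :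
    |(1+u)^(-b) - (1 - b*u + (b*(b+1)/2)*u^2)| ≤ (b*(b+1)*(b+2)*2^(b+3)) * |u|^3 := by
  set K : ℝ := b*(b+1)*(b+2)*2^(b+3) with hK
  -- functions
  set g : ℝ → ℝ := fun t => (1+t)^(-b) - (1 - b*t + (b*(b+1)/2)*t^2) with hg
  set g1 : ℝ → ℝ := fun t => (-b) * (1+t)^(-b-1) + b - b*(b+1)*t with hg1
  set g2 : ℝ → ℝ := fun t => b*(b+1) * (1+t)^(-b-2) - b*(b+1) with hg2
  set g3 : ℝ → ℝ := fun t => (-b)*(b+1)*(b+2) * (1+t)^(-b-3) with hg3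
  have hsub : Set.uIcc (0:ℝ) u ⊆ Set.Icc (-(1/2)) (1/2) := by
    intro v hv
    rcases Set.mem_uIcc.mp hv with ⟨h1, h2⟩ | ⟨h1, h2⟩ <;>
      constructor <;> cases' abs_le.mp hu with hl hr <;> linarith
  have hmem : ∀ v ∈ Set.uIcc (0:ℝ) u, -1 < v ∧ (1/2 : ℝ) ≤ 1 + v := by
    intro v hv; have := hsub hv; simp only [Set.mem_Icc] at this
    constructor <;> linarith [this.1, this.2]
  -- derivative facts
  have hdg : ∀ v ∈ Set.uIcc (0:ℝ) u, HasDerivAt g (g1 v) v := by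
    intro v hv
    have h := hasDerivAt_one_add_rpow (-b) v (hmem v hv).1
    have hpoly : HasDerivAt (fun t : ℝ => 1 - b*t + (b*(b+1)/2)*t^2)
        (-b + (b*(b+1)/2)*(2*v)) v := by
      have h1 : HasDerivAt (fun t : ℝ => t^2) (2*v) v := by
        simpa using (hasDerivAt_pow 2 v)
      have := ((hasDerivAt_id v).const_mul b).const_sub 1 |>.add (h1.const_mul (b*(b+1)/2))
      exact this.congr_deriv (by ring)
    have := h.sub hpoly
    refine this.congr_deriv ?_
    simp only [hg1]; ring
  have hdg1 : ∀ v ∈ Set.uIcc (0:ℝ) u, HasDerivAt g1 (g2 v) v := by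
    intro v hv
    have h := (hasDerivAt_one_add_rpow (-b-1) v (hmem v hv).1).const_mul (-b)
    have h2 : HasDerivAt (fun t : ℝ => b - b*(b+1)*t) (-(b*(b+1))) v := by
      simpa using ((hasDerivAt_id v).const_mul (b*(b+1))).const_sub b
    have := h.add h2
    refine (this.congr_deriv ?_).congr_of_eventuallyEq
      (Filter.Eventually.of_forall (fun t => by simp only [hg1, Pi.add_apply]; ring))
    simp only [hg2]; ring_nf
  have hdg2 : ∀ v ∈ Set.uIcc (0:ℝ) u, HasDerivAt g2 (g3 v) v := by
    intro v hv
    have h := (hasDerivAt_one_add_rpow (-b-2) v (hmem v hv).1).const_mul (b*(b+1))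
    have := h.sub_const (b*(b+1))
    refine this.congr_deriv ?_
    simp only [hg3]; ring_nf
  -- bound on g3
  have hKpos : (0:ℝ) < 2^(b+3) := Real.rpow_pos_of_pos (by norm_num) _
  have hg3bd : ∀ v ∈ Set.uIcc (0:ℝ) u, |g3 v| ≤ K := by
    intro v hv
    have h12 : (1/2 : ℝ) ≤ 1 + v := (hmem v hv).2
    have hpos : (0:ℝ) < 1 + v := by linarith
    have : (1+v)^(-b-3) ≤ (1/2:ℝ)^(-b-3) :=
      Real.rpow_le_rpow_of_nonpos (by norm_num) h12 (by linarith)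
    have h2 : (1/2:ℝ)^(-b-3) = 2^(b+3) := by
      rw [one_div, Real.inv_rpow (by norm_num : (0:ℝ) ≤ 2)]
      rw [← Real.rpow_neg (by norm_num : (0:ℝ) ≤ 2)]
      ring_nf
    have hnn : (0:ℝ) ≤ (1+v)^(-b-3) := (Real.rpow_pos_of_pos hpos _).le
    have hbbb : (0:ℝ) < b*(b+1)*(b+2) := by
      have h1 : (0:ℝ) < b+1 := by linarith
      have h2' : (0:ℝ) < b+2 := by linarith
      exact mul_pos (mul_pos hb h1) h2'
    have hle : (1+v)^(-b-3) ≤ 2^(b+3) := le_trans this (le_of_eq h2)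
    have heq : |g3 v| = b*(b+1)*(b+2) * (1+v)^(-b-3) := by
      simp only [hg3]
      rw [abs_of_nonpos (by nlinarith [mul_nonneg hbbb.le hnn])]
      ring
    rw [heq, hK]
    exact mul_le_mul_of_nonneg_left hle hbbb.le
  -- chain of MVT bounds
  have hg2bd : ∀ v ∈ Set.uIcc (0:ℝ) u, |g2 v| ≤ K * |u| := by
    intro v hv
    have hsub2 : Set.uIcc (0:ℝ) v ⊆ Set.uIcc (0:ℝ) u := Set.uIcc_subset_uIcc Set.left_mem_uIcc hv
    have := mvt_abs_le (f := g2) (f' := g3) (u := v)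
      (fun w hw => hdg2 w (hsub2 hw)) (fun w hw => hg3bd w (hsub2 hw))
      (by simp [hg2, Real.rpow_natCast])
    refine this.trans ?_
    have hvu : |v| ≤ |u| := by
      rcases Set.mem_uIcc.mp hv with ⟨h1,h2⟩|⟨h1,h2⟩ <;> rw [abs_le] <;>
        constructor <;> linarith [le_abs_self u, neg_abs_le u]
    have hKnn : 0 ≤ K := by positivity
    exact mul_le_mul_of_nonneg_left hvu hKnn
  have hg1bd : ∀ v ∈ Set.uIcc (0:ℝ) u, |g1 v| ≤ K * |u| * |u| := by
    intro v hv
    have hsub2 : Set.uIcc (0:ℝ) v ⊆ Set.uIcc (0:ℝ) u := Set.uIcc_subset_uIcc Set.left_mem_uIcc hv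
    have := mvt_abs_le (f := g1) (f' := g2) (u := v)
      (fun w hw => hdg1 w (hsub2 hw)) (fun w hw => hg2bd w (hsub2 hw))
      (by simp [hg1])
    refine this.trans ?_
    have hvu : |v| ≤ |u| := by
      rcases Set.mem_uIcc.mp hv with ⟨h1,h2⟩|⟨h1,h2⟩ <;> rw [abs_le] <;>
        constructor <;> linarith [le_abs_self u, neg_abs_le u]
    have hKnn : (0:ℝ) ≤ K * |u| := by positivity
    exact mul_le_mul_of_nonneg_left hvu hKnn
  have hgbd := mvt_abs_le (f := g) (f' := g1) (u := u) hdg hg1bd (by simp [hg])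
  calc |(1+u)^(-b) - (1 - b*u + (b*(b+1)/2)*u^2)| = |g u| := by simp [hg]
    _ ≤ K * |u| * |u| * |u| := hgbd
    _ = K * |u|^3 := by ring

lemma sum_cast_id (m : ℕ) : ∑ j ∈ Finset.range m, (j:ℝ) = m*(m-1)/2 := by
  induction m with
  | zero => simp
  | succ k ih => rw [Finset.sum_range_succ, ih]; push_cast; ring

lemma sum_cast_sq (m : ℕ) : ∑ j ∈ Finset.range m, (j:ℝ)^2 = m*(m-1)*(2*m-1)/6 := by
  induction m with
  | zero => simp
  | succ k ih => rw [Finset.sum_range_succ, ih]; push_cast; ring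

lemma rpow_neg_le_rev {a s t : ℝ} (ha : 0 < a) (hs : 0 < s) (ht : 0 < t)
    (h : s^(-a) ≤ t^(-a)) : t ≤ s := by
  by_contra hc
  push_neg at hc
  exact absurd h (not_le.mpr (Real.rpow_lt_rpow_of_neg hs hc (by linarith)))

-- structural lemma: gaps facts
lemma gap_facts (a L F : ℝ) (ha : 1 < a) (hL : 0 < L) (hF : 0 < F) (N : ℕ) (x : ℕ → ℝ)
    (hx : SegmentFixed a L F N x) (hN : 4 ≤ N) :
    (∀ j < N-1, 0 < x (j+2) - x (j+1)) ∧
    (∑ j ∈ Finset.range (N-1), (x (j+2) - x (j+1))) = L ∧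
    (∀ j < N-1, (x (j+2) - x (j+1))^(-a) = (x 2 - x 1)^(-a) + (j:ℝ)*F) := by
  obtain ⟨hx1, hx2, hx3, hx4, -, -⟩ := hx
  have hpos : ∀ j < N-1, 0 < x (j+2) - x (j+1) := by
    intro j hj
    have := hx3 (j+1) (by omega) (by omega)
    linarith
  refine ⟨hpos, ?_, ?_⟩
  · have := Finset.sum_range_sub (fun j => x (j+1)) (N-1)
    have hN1 : N - 1 + 1 = N := by omega
    calc ∑ j ∈ Finset.range (N-1), (x (j+2) - x (j+1))
        = x ((N-1)+1) - x 1 := by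
          rw [← this]
      _ = L := by rw [hN1, hx2, hx1]; ring
  · intro j hj
    induction j with
    | zero => simp
    | succ k ih =>
      have hrec : (x (k+3) - x (k+2))^(-a) = (x (k+2) - x (k+1))^(-a) + F := by
        have h4 := hx4 (k+2) (by omega) (by omega)
        simp only [fpow] at h4
        have e1 : k + 2 - 1 = k + 1 := by omega
        rw [e1] at h4
        have e2 : k + 2 + 1 = k + 3 := by omega
        rw [e2] at h4
        linarith
      have e3 : k + 1 + 2 = k + 3 := by omega
      have e4 : k + 1 + 1 = k + 2 := by omega
      rw [e3, e4, hrec, ih (by omega)]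
      push_cast; ring

noncomputable def Kc (a : ℝ) : ℝ := a⁻¹*(a⁻¹+1)*(a⁻¹+2)*(2:ℝ)^(a⁻¹+3)
noncomputable def Bc (a : ℝ) : ℝ := a⁻¹*(a⁻¹+1)/2
noncomputable def C3c (a : ℝ) : ℝ := a*(Bc a + Kc a)
noncomputable def C4c (a : ℝ) : ℝ := a*(Bc a * (C3c a)^2 + Kc a)
noncomputable def Cmain (a : ℝ) : ℝ := a⁻¹*(C4c a) + (Bc a)*(2*(C3c a) + (C3c a)^2) + Kc a

lemma key_bound (a L F : ℝ) (ha : 1 < a) (hL : 0 < L) (hF : 0 < F) (N : ℕ) (x : ℕ → ℝ)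
    (hx : SegmentFixed a L F N x) (hN : 4 ≤ N)
    (hMhalf : ((N:ℝ)-2) * ((L/((N:ℝ)-1))^a * F) ≤ 1/2) :
    |((x 2 - x 1) * ((N:ℝ)-1)/L - 1)
      - a⁻¹ * ((L/((N:ℝ)-1))^a * F) * ((N:ℝ)/2 - 1)
      - (a⁻¹*(a⁻¹+1)/12) * ((L/((N:ℝ)-1))^a * F)^2 * ((N:ℝ)-2) * ((N:ℝ)-3)|
      ≤ Cmain a * (((N:ℝ)-2) * ((L/((N:ℝ)-1))^a * F))^3 := by
  obtain ⟨hpos, hsum, hclosed⟩ := gap_facts a L F ha hL hF N x hx hN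
  set n : ℝ := (N:ℝ) with hn
  have hn4 : (4:ℝ) ≤ n := by rw [hn]; exact_mod_cast hN
  set m : ℕ := N - 1 with hm
  have hmc : (m:ℝ) = n - 1 := by rw [hm, hn]; push_cast [show 1 ≤ N by omega]; ring
  set h : ℝ := L/(n-1) with hh
  have hhpos : 0 < h := div_pos hL (by linarith)
  set q : ℝ := h^a * F with hq
  have hqpos : 0 < q := mul_pos (Real.rpow_pos_of_pos hhpos a) hF
  set M : ℝ := (n-2)*q with hM
  have hMpos : 0 < M := mul_pos (by linarith) hqpos
  have hM1 : M ≤ 1/2 := hMhalf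
  set d : ℕ → ℝ := fun j => x (j+2) - x (j+1) with hd
  set c : ℝ := (d 0)^(-a) with hc
  set ε : ℝ := c * h^a - 1 with hε
  set b : ℝ := a⁻¹ with hb
  have hbpos : 0 < b := by rw [hb]; positivity
  have hba : b * a = 1 := inv_mul_cancel₀ (by linarith)
  have hapos : (0:ℝ) < a := by linarith
  -- d is antitone
  have hdpos : ∀ j < m, 0 < d j := hpos
  have hdle : ∀ i j, i ≤ j → j < m → d j ≤ d i := by
    intro i j hij hj
    apply rpow_neg_le_rev hapos (hdpos i (by omega)) (hdpos j hj)
    rw [hclosed i (by omega), hclosed j hj]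
    have : (i:ℝ) ≤ (j:ℝ) := by exact_mod_cast hij
    nlinarith
  have hm3 : 3 ≤ m := by omega
  have hmpos : (0:ℝ) < (m:ℝ) := by rw [hmc]; linarith
  -- bounds on ε
  have hd0h : h ≤ d 0 := by
    have h1 : L ≤ (m:ℝ) * d 0 := by
      calc L = ∑ j ∈ Finset.range m, d j := hsum.symm
        _ ≤ ∑ j ∈ Finset.range m, d 0 := by
            apply Finset.sum_le_sum
            intro j hj
            exact hdle 0 j (Nat.zero_le j) (Finset.mem_range.mp hj)
        _ = (m:ℝ) * d 0 := by rw [Finset.sum_const, Finset.card_range]; simp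
    rw [hmc] at h1
    rw [hh, div_le_iff₀ (by linarith)]
    nlinarith
  have hdmh : d (m-1) ≤ h := by
    have h1 : (m:ℝ) * d (m-1) ≤ L := by
      calc (m:ℝ) * d (m-1) = ∑ j ∈ Finset.range m, d (m-1) := by
            rw [Finset.sum_const, Finset.card_range]; simp
        _ ≤ ∑ j ∈ Finset.range m, d j := by
            apply Finset.sum_le_sum
            intro j hj
            have hj' := Finset.mem_range.mp hj
            exact hdle j (m-1) (by omega) (by omega)
        _ = L := hsum
    rw [hmc] at h1
    rw [hh, le_div_iff₀ (by linarith)]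
    nlinarith
  have hεle : ε ≤ 0 := by
    have h1 : c ≤ h^(-a) := by
      rw [hc]
      exact Real.rpow_le_rpow_of_nonpos hhpos hd0h (by linarith)
    have h2 : h^(-a) * h^a = 1 := by
      rw [← Real.rpow_add hhpos]; simp
    have h3 : (0:ℝ) < h^a := Real.rpow_pos_of_pos hhpos a
    rw [hε]
    nlinarith
  have hεge : -M ≤ ε := by
    have h1 : h^(-a) ≤ (d (m-1))^(-a) :=
      Real.rpow_le_rpow_of_nonpos (hdpos (m-1) (by omega)) hdmh (by linarith)
    have h2 : (d (m-1))^(-a) = c + ((m:ℝ)-1)*F := by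
      have hcl := hclosed (m-1) (by omega)
      have hcast : ((m-1 : ℕ):ℝ) = (m:ℝ)-1 := by push_cast [show 1 ≤ m by omega]; ring
      rw [hcast] at hcl
      exact hcl
    have h3 : h^(-a) * h^a = 1 := by rw [← Real.rpow_add hhpos]; simp
    have h4 : (0:ℝ) < h^a := Real.rpow_pos_of_pos hhpos a
    have h5 : ((m:ℝ)-1)*F*h^a = M := by rw [hM, hq, hmc]; ring
    rw [hε]
    nlinarith
  -- positivity of 1 + ε + j*q and gap formula
  have hha : (0:ℝ) < h^a := Real.rpow_pos_of_pos hhpos a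
  have hXeq : ∀ j < m, 1 + ε + (j:ℝ)*q = h^a * (c + (j:ℝ)*F) := by
    intro j hj
    rw [hε, hq]; ring
  have hcj : ∀ j < m, 0 < c + (j:ℝ)*F := by
    intro j hj
    have := hclosed j hj
    have h2 : (0:ℝ) < (d j)^(-a) := Real.rpow_pos_of_pos (hdpos j hj) _
    rw [this] at h2
    exact h2
  have hXpos : ∀ j < m, 0 < 1 + ε + (j:ℝ)*q := by
    intro j hj
    rw [hXeq j hj]
    exact mul_pos hha (hcj j hj)
  have hdg : ∀ j < m, d j = h * (1 + ε + (j:ℝ)*q)^(-b) := by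
    intro j hj
    have h1 : (d j)^(-a) = c + (j:ℝ)*F := hclosed j hj
    have h2 : ((d j)^(-a))^(-b) = d j := by
      rw [← Real.rpow_mul (hdpos j hj).le, show (-a)*(-b) = b*a by ring, hba, Real.rpow_one]
    rw [← h2, h1]
    have h3 : c + (j:ℝ)*F = h^(-a) * (1 + ε + (j:ℝ)*q) := by
      rw [hXeq j hj, ← mul_assoc, ← Real.rpow_add hhpos]
      simp
    rw [h3, Real.mul_rpow (Real.rpow_pos_of_pos hhpos _).le (hXpos j hj).le]
    congr 1
    rw [← Real.rpow_mul hhpos.le, show (-a) * (-b) = b*a by ring, hba, Real.rpow_one]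
  -- sum equation
  have hLhm : L = h * (m:ℝ) := by
    rw [hh, hmc]
    rw [div_mul_eq_mul_div, mul_div_assoc, div_self (by linarith : n - 1 ≠ 0), mul_one]
  have hsumeq : ∑ j ∈ Finset.range m, (1 + ε + (j:ℝ)*q)^(-b) = (m:ℝ) := by
    have h1 : ∑ j ∈ Finset.range m, d j = ∑ j ∈ Finset.range m, h * (1 + ε + (j:ℝ)*q)^(-b) :=
      Finset.sum_congr rfl (fun j hj => hdg j (Finset.mem_range.mp hj))
    rw [hsum] at h1
    rw [← Finset.mul_sum] at h1
    rw [hLhm] at h1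
    exact (mul_left_cancel₀ (ne_of_gt hhpos) h1).symm
  -- bounds on u j := ε + j*q
  have hub : ∀ j < m, |ε + (j:ℝ)*q| ≤ M := by
    intro j hj
    rw [abs_le]
    constructor
    · have : (0:ℝ) ≤ (j:ℝ)*q := mul_nonneg (Nat.cast_nonneg j) hqpos.le
      linarith
    · have hjm : (j:ℝ) ≤ (m:ℝ) - 1 := by
        have : (j:ℝ) ≤ (m:ℝ) - 1 ↔ (j:ℕ) ≤ m - 1 := by
          rw [← Nat.cast_le (α := ℝ)]
          push_cast [show 1 ≤ m by omega]
          constructor <;> intro <;> linarith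
        rw [this]
        omega
      have : (j:ℝ)*q ≤ ((m:ℝ)-1)*q := mul_le_mul_of_nonneg_right hjm hqpos.le
      have hMeq : ((m:ℝ)-1)*q = M := by rw [hM, hmc]; ring
      linarith
  -- Taylor constants
  set β : ℝ := Bc a with hβ
  set K : ℝ := Kc a with hK
  have hβval : β = b*(b+1)/2 := by rw [hβ, Bc, hb]
  have hKval : K = b*(b+1)*(b+2)*(2:ℝ)^(b+3) := by rw [hK, Kc, hb]
  have hβpos : 0 < β := by rw [hβval]; positivity
  have hKpos : 0 < K := by
    rw [hKval]
    have := Real.rpow_pos_of_pos (show (0:ℝ) < 2 by norm_num) (b+3)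
    positivity
  -- remainder bound
  have hrem : ∀ j < m,
      |(1 + (ε + (j:ℝ)*q))^(-b) - (1 - b*(ε + (j:ℝ)*q) + β*(ε + (j:ℝ)*q)^2)| ≤ K*M^3 := by
    intro j hj
    have h1 := taylor3 b (ε + (j:ℝ)*q) hbpos ((hub j hj).trans hM1)
    rw [← hβval, ← hKval] at h1
    refine h1.trans ?_
    have h2 : |ε + (j:ℝ)*q|^3 ≤ M^3 := by
      apply pow_le_pow_left₀ (abs_nonneg _) (hub j hj)
    nlinarith
  -- the key sum identity E2'
  set η : ℝ := ε + q*(n-2)/2 with hη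
  have hsum_u : ∑ j ∈ Finset.range m, (ε + (j:ℝ)*q) = (n-1)*η := by
    have h1 : ∑ j ∈ Finset.range m, (ε + (j:ℝ)*q)
        = (m:ℝ)*ε + ((m:ℝ)*((m:ℝ)-1)/2)*q := by
      rw [Finset.sum_add_distrib, Finset.sum_const, Finset.card_range, nsmul_eq_mul,
        ← Finset.sum_mul, sum_cast_id]
    rw [h1, hmc, hη]; ring
  have hsum_u2 : ∑ j ∈ Finset.range m, (ε + (j:ℝ)*q)^2
      = (n-1)*η^2 + q^2*(n-1)*(n-2)*n/12 := by
    have h1 : ∀ j ∈ Finset.range m, (ε + (j:ℝ)*q)^2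
        = ε^2 + (2*ε*q)*(j:ℝ) + q^2*(j:ℝ)^2 := fun j _ => by ring
    rw [Finset.sum_congr rfl h1]
    rw [Finset.sum_add_distrib, Finset.sum_add_distrib, Finset.sum_const, Finset.card_range,
      nsmul_eq_mul, ← Finset.mul_sum, ← Finset.mul_sum, sum_cast_id, sum_cast_sq, hmc, hη]
    ring
  -- E2': b * (n-1) * η = β * Σu² + R
  set R : ℝ := ∑ j ∈ Finset.range m, ((1 + (ε + (j:ℝ)*q))^(-b)
      - (1 - b*(ε + (j:ℝ)*q) + β*(ε + (j:ℝ)*q)^2)) with hR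
  have hRbd : |R| ≤ (n-1)*(K*M^3) := by
    rw [hR]
    refine (Finset.abs_sum_le_sum_abs _ _).trans ?_
    have := Finset.sum_le_sum (fun j hj => hrem j (Finset.mem_range.mp hj))
    refine this.trans ?_
    rw [Finset.sum_const, Finset.card_range, nsmul_eq_mul, hmc]
  have hE2 : b*((n-1)*η) = β*((n-1)*η^2 + q^2*(n-1)*(n-2)*n/12) + R := by
    have h1 : ∑ j ∈ Finset.range m, (1 + (ε + (j:ℝ)*q))^(-b)
        = ∑ j ∈ Finset.range m, ((1 - b*(ε + (j:ℝ)*q) + β*(ε + (j:ℝ)*q)^2)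
          + ((1 + (ε + (j:ℝ)*q))^(-b) - (1 - b*(ε + (j:ℝ)*q) + β*(ε + (j:ℝ)*q)^2))) :=
      Finset.sum_congr rfl (fun j _ => by ring)
    have h2 : ∑ j ∈ Finset.range m, (1 + ε + (j:ℝ)*q)^(-b)
        = ∑ j ∈ Finset.range m, (1 + (ε + (j:ℝ)*q))^(-b) :=
      Finset.sum_congr rfl (fun j _ => by rw [add_assoc])
    rw [h2, h1] at hsumeq
    rw [Finset.sum_add_distrib, ← hR] at hsumeq
    have h3 : ∑ j ∈ Finset.range m, (1 - b*(ε + (j:ℝ)*q) + β*(ε + (j:ℝ)*q)^2)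
        = (m:ℝ) - b*((n-1)*η) + β*((n-1)*η^2 + q^2*(n-1)*(n-2)*n/12) := by
      have : ∀ j ∈ Finset.range m, (1 - b*(ε + (j:ℝ)*q) + β*(ε + (j:ℝ)*q)^2)
          = 1 - b*(ε + (j:ℝ)*q) + β*(ε + (j:ℝ)*q)^2 := fun j _ => rfl
      rw [Finset.sum_add_distrib, Finset.sum_sub_distrib, Finset.sum_const, Finset.card_range,
        nsmul_eq_mul, mul_one, ← Finset.mul_sum, ← Finset.mul_sum, hsum_u, hsum_u2]
    rw [h3] at hsumeq
    linarith
  -- crude bound on η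
  have hM0 : (0:ℝ) ≤ M := hMpos.le
  have hbn : 0 < b*(n-1) := mul_pos hbpos (by linarith)
  have hM32 : M^3 ≤ M^2 := pow_le_pow_of_le_one hM0 (by linarith) (by norm_num)
  have hM43 : M^4 ≤ M^3 := pow_le_pow_of_le_one hM0 (by linarith) (by norm_num)
  have hbC3 : b*C3c a = β + K := by
    rw [C3c, ← hβ, ← hK, ← mul_assoc, hba, one_mul]
  have hbC4 : b*C4c a = β*(C3c a)^2 + K := by
    rw [C4c, ← hβ, ← hK, ← mul_assoc, hba, one_mul]
  have hηbd : |η| ≤ C3c a * M^2 := by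
    have hE2' : b*((n-1)*η) = β*(∑ j ∈ Finset.range m, (ε + (j:ℝ)*q)^2) + R := by
      rw [hsum_u2]; exact hE2
    have hsu2bd : ∑ j ∈ Finset.range m, (ε + (j:ℝ)*q)^2 ≤ (n-1)*M^2 := by
      have h1 : ∀ j ∈ Finset.range m, (ε + (j:ℝ)*q)^2 ≤ M^2 := by
        intro j hj
        have h2 := hub j (Finset.mem_range.mp hj)
        rw [← sq_abs]
        exact pow_le_pow_left₀ (abs_nonneg _) h2 2
      refine (Finset.sum_le_sum h1).trans ?_
      rw [Finset.sum_const, Finset.card_range, nsmul_eq_mul, hmc]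
    have hsu2nn : (0:ℝ) ≤ ∑ j ∈ Finset.range m, (ε + (j:ℝ)*q)^2 :=
      Finset.sum_nonneg (fun j _ => sq_nonneg _)
    have habs : |b*((n-1)*η)| ≤ β*((n-1)*M^2) + (n-1)*(K*M^3) := by
      rw [hE2']
      refine (abs_add_le _ _).trans ?_
      have h2 : |β*(∑ j ∈ Finset.range m, (ε + (j:ℝ)*q)^2)| ≤ β*((n-1)*M^2) := by
        rw [abs_mul, abs_of_pos hβpos, abs_of_nonneg hsu2nn]
        exact mul_le_mul_of_nonneg_left hsu2bd hβpos.le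
      linarith only [h2, hRbd]
    rw [abs_mul, abs_mul, abs_of_pos hbpos,
      abs_of_pos (show (0:ℝ) < n-1 by linarith), ← mul_assoc] at habs
    refine le_of_mul_le_mul_left ?_ hbn
    have heq : b*(n-1)*(C3c a*M^2) = (n-1)*((β + K)*M^2) := by
      linear_combination ((n-1)*M^2) * hbC3
    rw [heq]
    have h3 : (n-1)*(K*M^3) ≤ (n-1)*(K*M^2) := by
      have h4 := mul_le_mul_of_nonneg_left hM32 hKpos.le
      have hn1 : (0:ℝ) ≤ n-1 := by linarith
      exact mul_le_mul_of_nonneg_left h4 hn1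
    have heq2 : β*((n-1)*M^2) + (n-1)*(K*M^2) = (n-1)*((β+K)*M^2) := by ring
    linarith only [habs, h3, heq2]
  -- refined: Ev
  set Ev : ℝ := η - a*β*(q^2*n*(n-2)/12) with hEvdef
  have hEveq : b*((n-1)*Ev) = β*((n-1)*η^2) + R := by
    rw [hEvdef]
    linear_combination hE2 - (β*q^2*n*(n-2)*(n-1)/12) * hba
  have hC3pos : 0 < C3c a := by
    rw [C3c]
    have h1 : 0 < Bc a + Kc a := by rw [← hβ, ← hK]; linarith only [hβpos, hKpos]
    exact mul_pos hapos h1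
  have hη2 : η^2 ≤ (C3c a)^2*M^3 := by
    have h1 : |η| * |η| ≤ (C3c a*M^2)*(C3c a*M^2) :=
      mul_self_le_mul_self (abs_nonneg η) hηbd
    rw [← abs_mul, abs_mul_self] at h1
    have h2 : (C3c a*M^2)*(C3c a*M^2) = (C3c a)^2*M^4 := by ring
    have h3 : (C3c a)^2*M^4 ≤ (C3c a)^2*M^3 :=
      mul_le_mul_of_nonneg_left hM43 (sq_nonneg _)
    calc η^2 = η*η := sq η
      _ ≤ (C3c a*M^2)*(C3c a*M^2) := h1
      _ = (C3c a)^2*M^4 := h2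
      _ ≤ (C3c a)^2*M^3 := h3
  have hEvbd : |Ev| ≤ C4c a * M^3 := by
    have habs : |b*((n-1)*Ev)| ≤ β*((n-1)*η^2) + (n-1)*(K*M^3) := by
      rw [hEveq]
      refine (abs_add_le _ _).trans ?_
      have h2 : |β*((n-1)*η^2)| = β*((n-1)*η^2) := by
        rw [abs_of_nonneg]
        have hn1 : (0:ℝ) ≤ n-1 := by linarith
        positivity
      linarith only [h2, hRbd]
    rw [abs_mul, abs_mul, abs_of_pos hbpos,
      abs_of_pos (show (0:ℝ) < n-1 by linarith), ← mul_assoc] at habs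
    refine le_of_mul_le_mul_left ?_ hbn
    have heq : b*(n-1)*(C4c a*M^3) = (n-1)*((β*(C3c a)^2 + K)*M^3) := by
      linear_combination ((n-1)*M^3) * hbC4
    rw [heq]
    have h3 : β*((n-1)*η^2) ≤ β*((n-1)*((C3c a)^2*M^3)) := by
      apply mul_le_mul_of_nonneg_left _ hβpos.le
      apply mul_le_mul_of_nonneg_left hη2 (by linarith : (0:ℝ) ≤ n-1)
    have heq2 : β*((n-1)*((C3c a)^2*M^3)) + (n-1)*(K*M^3)
        = (n-1)*((β*(C3c a)^2 + K)*M^3) := by ring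
    linarith only [habs, h3, heq2]
  -- delta1 in terms of epsilon
  have hdg0 : d 0 = h * (1 + ε)^(-b) := by
    have h1 := hdg 0 (by omega)
    have h2 : 1 + ε + ((0:ℕ):ℝ)*q = 1 + ε := by push_cast; ring
    rw [h2] at h1
    exact h1
  have hLne : L ≠ 0 := ne_of_gt hL
  have hδ : (x 2 - x 1) * (n - 1) / L = (1 + ε)^(-b) := by
    have hx21 : x 2 - x 1 = d 0 := rfl
    have hL' : L = h*(n-1) := by rw [hLhm, hmc]
    rw [hx21, hdg0, hL']
    rw [div_eq_iff (mul_ne_zero (ne_of_gt hhpos)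
      (ne_of_gt (show (0:ℝ) < n - 1 by linarith only [hn4])))]
    ring
  set r0 : ℝ := (1+ε)^(-b) - (1 - b*ε + β*ε^2) with hr0def
  clear_value r0
  have hεabs : |ε| ≤ M := abs_le.mpr ⟨hεge, le_trans hεle hM0⟩
  have hr0bd : |r0| ≤ K*M^3 := by
    rw [hr0def]
    have h1 := taylor3 b ε hbpos (hεabs.trans hM1)
    rw [← hβval, ← hKval] at h1
    refine h1.trans ?_
    exact mul_le_mul_of_nonneg_left (pow_le_pow_left₀ (abs_nonneg ε) hεabs 3) hKpos.le
  have hpow : (1 + ε)^(-b) = 1 - b*ε + β*ε^2 + r0 := by rw [hr0def]; ring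
  have hεeq : ε = -(q*(n-2)/2) + a*β*(q^2*n*(n-2)/12) + Ev := by
    rw [hEvdef, hη]; ring
  have hηeq : η = a*β*(q^2*n*(n-2)/12) + Ev := by rw [hEvdef]; ring
  clear_value n m h q M d c ε b β K η Ev
  have hG : (x 2 - x 1) * (n - 1) / L - 1 - b * q * (n / 2 - 1)
        - b * (b + 1) / 12 * q ^ 2 * (n - 2) * (n - 3)
      = -(b*Ev) + β*(2*(-(q*(n-2)/2))*η + η^2) + r0 := by
    rw [hδ, hpow, hηeq, hεeq, hβval]
    linear_combination (-(b*(b+1)*q^2*(n-2)*n/24)) * hba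
  rw [hG]
  -- final numeric bound
  have hCm : Cmain a = b*C4c a + β*(2*C3c a + (C3c a)^2) + K := by
    rw [Cmain, ← hb, ← hβ, ← hK]
  have habs1 : |(-(b*Ev)) + β*(2*(-(q*(n-2)/2))*η + η^2) + r0|
      ≤ b*|Ev| + β*(q*(n-2)*|η| + η^2) + |r0| := by
    refine (abs_add_le _ _).trans ?_
    have h1 : |(-(b*Ev)) + β*(2*(-(q*(n-2)/2))*η + η^2)|
        ≤ b*|Ev| + β*(q*(n-2)*|η| + η^2) := by
      refine (abs_add_le _ _).trans ?_
      have h2 : |(-(b*Ev))| = b*|Ev| := by rw [abs_neg, abs_mul, abs_of_pos hbpos]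
      have h3 : |β*(2*(-(q*(n-2)/2))*η + η^2)| ≤ β*(q*(n-2)*|η| + η^2) := by
        rw [abs_mul, abs_of_pos hβpos]
        apply mul_le_mul_of_nonneg_left _ hβpos.le
        refine (abs_add_le _ _).trans ?_
        have h4 : |2*(-(q*(n-2)/2))*η| = q*(n-2)*|η| := by
          rw [abs_mul]
          have : |2*(-(q*(n-2)/2))| = q*(n-2) := by
            have hqn : (0:ℝ) ≤ q*(n-2) := mul_nonneg hqpos.le (by linarith only [hn4])
            rw [abs_of_nonpos (by linarith only [hqn] : 2*(-(q*(n-2)/2)) ≤ 0)]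
            ring
          rw [this]
        have h5 : |η^2| = η^2 := abs_of_nonneg (sq_nonneg η)
        linarith only [h4.le, h5.le, h4.ge, h5.ge]
      linarith only [h2, h3]
    linarith only [h1]
  refine habs1.trans ?_
  rw [hCm]
  have hqn2 : q*(n-2) = M := by rw [hM]; ring
  have hb1 : b*|Ev| ≤ b*(C4c a*M^3) := mul_le_mul_of_nonneg_left hEvbd hbpos.le
  have hb2 : β*(q*(n-2)*|η| + η^2) ≤ β*(2*C3c a*M^3 + (C3c a)^2*M^3) := by
    apply mul_le_mul_of_nonneg_left _ hβpos.le
    have h1 : q*(n-2)*|η| ≤ M*(C3c a*M^2) := by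
      rw [hqn2]
      exact mul_le_mul_of_nonneg_left hηbd hM0
    have h2 : M*(C3c a*M^2) ≤ 2*C3c a*M^3 := by
      have : M*(C3c a*M^2) = C3c a*M^3 := by ring
      rw [this]
      have h3 : (0:ℝ) ≤ C3c a*M^3 := by positivity
      linarith only [h3]
    linarith only [h1, h2, hη2]
  have heq3 : b*(C4c a*M^3) + β*(2*C3c a*M^3 + (C3c a)^2*M^3) + K*M^3
      = (b*C4c a + β*(2*C3c a + (C3c a)^2) + K)*M^3 := by ring
  linarith only [hb1, hb2, hr0bd, heq3]

lemma M_bound (a L F : ℝ) (ha : 1 < a) (hL : 0 < L) (hF : 0 < F) (N : ℕ) (hN : 4 ≤ N) :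
    ((N:ℝ)-2)*((L/((N:ℝ)-1))^a*F) ≤ (F*L^a*2^a)*(N:ℝ)^(1-a) := by
  set n : ℝ := (N:ℝ) with hn
  have hn4 : (4:ℝ) ≤ n := by rw [hn]; exact_mod_cast hN
  have hn0 : (0:ℝ) < n := by linarith
  have ha0 : (0:ℝ) ≤ a := by linarith
  have h1 : (L/(n-1))^a = L^a/(n-1)^a := Real.div_rpow hL.le (by linarith : (0:ℝ) ≤ n-1) a
  have h2 : (n/2)^a ≤ (n-1)^a :=
    Real.rpow_le_rpow (by linarith) (by linarith) ha0
  have hp1 : (0:ℝ) < (n/2)^a := Real.rpow_pos_of_pos (by linarith) a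
  have hp2 : (0:ℝ) < (n-1)^a := Real.rpow_pos_of_pos (by linarith) a
  have h3 : L^a/(n-1)^a ≤ L^a/(n/2)^a :=
    div_le_div_of_nonneg_left (Real.rpow_pos_of_pos hL a).le hp1 h2
  have h4 : (n/2)^a = n^a/2^a := Real.div_rpow hn0.le (by norm_num : (0:ℝ) ≤ 2) a
  have hp3 : (0:ℝ) < n^a := Real.rpow_pos_of_pos hn0 a
  have hp4 : (0:ℝ) < (2:ℝ)^a := Real.rpow_pos_of_pos (by norm_num) a
  have h5 : L^a/(n/2)^a = L^a*2^a/n^a := by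
    rw [h4]
    field_simp
  have h6 : n^(1-a) = n/n^a := by
    rw [show (1:ℝ)-a = 1 + (-a) from by ring, Real.rpow_add hn0, Real.rpow_one,
      Real.rpow_neg hn0.le]
    field_simp
  have hLa : (0:ℝ) < L^a := Real.rpow_pos_of_pos hL a
  have hstep : (L/(n-1))^a ≤ L^a*2^a/n^a := by
    rw [h1]
    calc L^a/(n-1)^a ≤ L^a/(n/2)^a := h3
      _ = L^a*2^a/n^a := h5
  have hn2 : (0:ℝ) ≤ n - 2 := by linarith
  calc (n-2)*((L/(n-1))^a*F) ≤ n*((L^a*2^a/n^a)*F) := by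
        apply mul_le_mul (by linarith)
          (mul_le_mul_of_nonneg_right hstep hF.le)
          (mul_nonneg (Real.rpow_pos_of_pos (div_pos hL (by linarith)) a).le hF.le)
          hn0.le
    _ = (F*L^a*2^a)*(n/n^a) := by field_simp
    _ = (F*L^a*2^a)*n^(1-a) := by rw [h6]

lemma Cmain_pos (a : ℝ) (ha : 1 < a) : 0 < Cmain a := by
  have hb : (0:ℝ) < a⁻¹ := by positivity
  have hK : 0 < Kc a := by
    rw [Kc]
    have := Real.rpow_pos_of_pos (show (0:ℝ) < 2 by norm_num) (a⁻¹+3)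
    positivity
  have hB : 0 < Bc a := by rw [Bc]; positivity
  have hC3 : 0 < C3c a := by
    rw [C3c]; exact mul_pos (by linarith) (by linarith)
  have hC4 : 0 < C4c a := by
    rw [C4c]
    exact mul_pos (by linarith) (by nlinarith)
  rw [Cmain]
  have h1 : 0 < a⁻¹*C4c a := mul_pos hb hC4
  have h2 : 0 < Bc a*(2*C3c a + (C3c a)^2) := mul_pos hB (by nlinarith)
  linarith

/-- Asymptotic expansion of `δ 1` for the fixed configurations on `[0, L]`:
with `Δ k = (L/(N-1)) (1 + δ k)` and `q = (L/(N-1))^a F`,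
`δ 1 = a⁻¹ q (N/2 - 1) + (a⁻¹(a⁻¹+1)/12) q² (N-2)(N-3) + o(N^{-2a+2})`. -/
theorem delta_one_expansion (a L F : ℝ) (ha : 1 < a) (hL : 0 < L) (hF : 0 < F)
    (N₀ : ℕ) (x : ℕ → ℕ → ℝ) (hx : ∀ N ≥ N₀, SegmentFixed a L F N (x N)) :
    (fun N : ℕ =>
        ((x N 2 - x N 1) * ((N : ℝ) - 1) / L - 1)
          - a⁻¹ * ((L / ((N : ℝ) - 1)) ^ a * F) * ((N : ℝ) / 2 - 1)
          - (a⁻¹ * (a⁻¹ + 1) / 12) * ((L / ((N : ℝ) - 1)) ^ a * F) ^ 2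
              * ((N : ℝ) - 2) * ((N : ℝ) - 3))
      =o[atTop] (fun N : ℕ => (N : ℝ) ^ (-2 * a + 2)) := by
  rw [Asymptotics.isLittleO_iff]
  intro c hc
  set C1 : ℝ := F*L^a*2^a with hC1
  have hC1pos : 0 < C1 := by
    rw [hC1]
    have h1 : (0:ℝ) < L^a := Real.rpow_pos_of_pos hL a
    have h2 : (0:ℝ) < (2:ℝ)^a := Real.rpow_pos_of_pos (by norm_num) a
    positivity
  have hCm := Cmain_pos a ha
  have htend : Tendsto (fun N:ℕ => (N:ℝ)^(1-a)) atTop (nhds 0) := by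
    have h1 := tendsto_rpow_neg_atTop (show (0:ℝ) < a-1 by linarith)
    have h2 : Tendsto (fun N:ℕ => (N:ℝ)) atTop atTop := tendsto_natCast_atTop_atTop
    have h3 := h1.comp h2
    have h4 : -(a-1) = 1-a := by ring
    rw [h4] at h3
    exact h3
  have hev3 : ∀ᶠ N:ℕ in atTop, C1*(N:ℝ)^(1-a) < 1/2 := by
    have h1 := htend.const_mul C1
    rw [mul_zero] at h1
    exact h1.eventually_lt_const (by norm_num)
  have hev4 : ∀ᶠ N:ℕ in atTop, (Cmain a * C1^3)*(N:ℝ)^(1-a) < c := by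
    have h1 := htend.const_mul (Cmain a * C1^3)
    rw [mul_zero] at h1
    exact h1.eventually_lt_const hc
  filter_upwards [eventually_ge_atTop N₀, eventually_ge_atTop 4, hev3, hev4]
    with N hN0 hN4 h3 h4
  have hn4 : (4:ℝ) ≤ (N:ℝ) := by exact_mod_cast hN4
  have hn0 : (0:ℝ) < (N:ℝ) := by linarith
  have hMC1 := M_bound a L F ha hL hF N hN4
  rw [← hC1] at hMC1
  have hM0 : (0:ℝ) ≤ ((N:ℝ)-2)*((L/((N:ℝ)-1))^a*F) := by
    have h5 : (0:ℝ) < (L/((N:ℝ)-1))^a :=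
      Real.rpow_pos_of_pos (div_pos hL (by linarith)) a
    have h6 : (0:ℝ) ≤ (N:ℝ)-2 := by linarith
    positivity
  have hkey := key_bound a L F ha hL hF N (x N) (hx N hN0) hN4
    (le_trans hMC1 (le_of_lt h3))
  have hcube : (((N:ℝ)-2)*((L/((N:ℝ)-1))^a*F))^3 ≤ (C1*(N:ℝ)^(1-a))^3 :=
    pow_le_pow_left₀ hM0 hMC1 3
  have hsplit : (C1*(N:ℝ)^(1-a))^3 = C1^3 * ((N:ℝ)^(1-a)*(N:ℝ)^(-2*a+2)) := by
    have h7 : ((N:ℝ)^(1-a))^(3:ℕ) = (N:ℝ)^((1-a)*3) := by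
      rw [← Real.rpow_natCast ((N:ℝ)^(1-a)) 3, ← Real.rpow_mul hn0.le]
      norm_num
    have h8 : (N:ℝ)^((1-a)*3) = (N:ℝ)^(1-a)*(N:ℝ)^(-2*a+2) := by
      rw [← Real.rpow_add hn0]
      congr 1
      ring
    rw [mul_pow, h7, h8]
  have hnorm : ‖(N:ℝ)^(-2*a+2)‖ = (N:ℝ)^(-2*a+2) := by
    rw [Real.norm_eq_abs, abs_of_nonneg (Real.rpow_nonneg hn0.le _)]
  rw [Real.norm_eq_abs, hnorm]
  have hg0 : (0:ℝ) ≤ (N:ℝ)^(-2*a+2) := Real.rpow_nonneg hn0.le _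
  calc |((x N 2 - x N 1) * ((N:ℝ) - 1) / L - 1)
          - a⁻¹ * ((L / ((N:ℝ) - 1)) ^ a * F) * ((N:ℝ) / 2 - 1)
          - (a⁻¹ * (a⁻¹ + 1) / 12) * ((L / ((N:ℝ) - 1)) ^ a * F) ^ 2
              * ((N:ℝ) - 2) * ((N:ℝ) - 3)|
      ≤ Cmain a * (((N:ℝ)-2)*((L/((N:ℝ)-1))^a*F))^3 := hkey
    _ ≤ Cmain a * (C1*(N:ℝ)^(1-a))^3 := mul_le_mul_of_nonneg_left hcube hCm.le
    _ = ((Cmain a * C1^3)*(N:ℝ)^(1-a)) * (N:ℝ)^(-2*a+2) := by rw [hsplit]; ring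
    _ ≤ c * (N:ℝ)^(-2*a+2) := mul_le_mul_of_nonneg_right (le_of_lt h4) hg0
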